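/- Let u and v be palindromes with v ≠ ε such that uv = z^k for some string z and some integer k ≥ 1. Then there exist palindromes x and y such that y ≠ ε, z = xy, u = (xy)^m x for some integer m ≥ 0, and v = (yx)^l y for some integer l ≥ 0. -/
import Mathlib


/-- `w = z^k`: concatenation of `k` copies of `z`. -/
def listPow {α : Type*} (z : List α) (k : ℕ) : List α := (List.replicate k z).flatten

/-- A positive integer `p` is a period of `w` if `w[i] = w[i+p]` whenever both positions
are inside `w` (0-indexed). -/
def HasPeriod {α : Type*} (w : List α) (p : ℕ) : Prop :=
  0 < p ∧ ∀ i : ℕ, i + p < w.length → w[i]? = w[i + p]?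

lemma listPow_length {α : Type*} (z : List α) (k : ℕ) :
    (listPow z k).length = k * z.length := by simp [listPow]

lemma listPow_succ {α : Type*} (z : List α) (k : ℕ) :
    listPow z (k+1) = z ++ listPow z k := by
  rw [listPow, List.replicate_succ, List.flatten_cons]; rfl

lemma listPow_add {α : Type*} (z : List α) (a b : ℕ) :
    listPow z (a+b) = listPow z a ++ listPow z b := by
  rw [listPow, listPow, listPow, List.replicate_add, List.flatten_append]

lemma listPow_zero {α : Type*} (z : List α) : listPow z 0 = [] := rfl

lemma take_listPow {α : Type*} (z : List α) :
    ∀ q k r, q < k → r ≤ z.length →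
      (listPow z k).take (q * z.length + r) = listPow z q ++ z.take r := by
  intro q
  induction q with
  | zero =>
    intro k r hk hr
    obtain ⟨k', rfl⟩ : ∃ k', k = k' + 1 := ⟨k - 1, by omega⟩
    rw [listPow_succ, List.take_append, listPow_zero]
    simp [Nat.sub_eq_zero_of_le hr]
  | succ q ih =>
    intro k r hk hr
    obtain ⟨k', rfl⟩ : ∃ k', k = k' + 1 := ⟨k - 1, by omega⟩
    rw [listPow_succ, List.take_append]
    have h1 : (q + 1) * z.length + r = z.length + (q * z.length + r) := by ring
    rw [h1, List.take_of_length_le (by omega), Nat.add_sub_cancel_left,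
      ih k' r (by omega) hr, listPow_succ, List.append_assoc]

lemma shift_listPow {α : Type*} (x y : List α) :
    ∀ l, y ++ listPow (x ++ y) l = listPow (y ++ x) l ++ y := by
  intro l
  induction l with
  | zero => simp [listPow_zero]
  | succ n ih =>
    calc y ++ listPow (x ++ y) (n + 1)
        = (y ++ x) ++ (y ++ listPow (x ++ y) n) := by
          rw [listPow_succ]; simp [List.append_assoc]
      _ = (y ++ x) ++ (listPow (y ++ x) n ++ y) := by rw [ih]
      _ = listPow (y ++ x) (n + 1) ++ y := by
          rw [listPow_succ]; simp [List.append_assoc]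

lemma eq_of_prefix_of_length {α : Type*} {p s w : List α}
    (h1 : p <+: w) (h2 : s <+: w) (hl : p.length = s.length) : p = s := by
  rw [List.prefix_iff_eq_take.mp h1, List.prefix_iff_eq_take.mp h2, hl]

lemma pal_of_prefix_suffix {α : Type*} {p w : List α}
    (hw : w.reverse = w) (h1 : p <+: w) (h2 : p <:+ w) : p.reverse = p := by
  have h3 : p.reverse <:+ w := by
    have := List.reverse_suffix.mpr h1
    rwa [hw] at this
  have h4 : p.reverse.reverse <+: w.reverse := List.reverse_prefix.mpr h3
  have h5 : p.reverse <+: w.reverse := List.reverse_prefix.mpr h2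
  rw [hw] at h4 h5
  have := eq_of_prefix_of_length h4 h5 (by simp)
  rw [List.reverse_reverse] at this
  exact this.symm

/-- If `u`, `v` are palindromes with `v ≠ ε` and `uv = z^k` for some `k ≥ 1`, then there
are palindromes `x`, `y` with `y ≠ ε`, `z = xy`, `u = (xy)^m x` and `v = (yx)^l y`. -/
theorem stmt_3 {α : Type*} (u v z : List α) (hu : u.reverse = u) (hv : v.reverse = v)
    (hvne : v ≠ []) (k : ℕ) (hk : 1 ≤ k) (h : u ++ v = listPow z k) :
    ∃ x y : List α, x.reverse = x ∧ y.reverse = y ∧ y ≠ [] ∧ z = x ++ y ∧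
      (∃ m : ℕ, u = listPow (x ++ y) m ++ x) ∧ (∃ l : ℕ, v = listPow (y ++ x) l ++ y) := by
  have hz : z ≠ [] := by
    rintro rfl
    have : listPow ([] : List α) k = [] := by simp [listPow]
    rw [this] at h
    exact hvne (List.append_eq_nil_iff.mp h).2
  set n := z.length with hn
  have hnpos : 0 < n := List.length_pos_iff.mpr hz
  set q := u.length / n with hq
  set r := u.length % n with hr
  have hrn : r < n := Nat.mod_lt _ hnpos
  have hulen : q * n + r = u.length := by
    rw [hq, hr, Nat.mul_comm]; exact Nat.div_add_mod _ _
  have hlen : u.length + v.length = k * n := by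
    have := congrArg List.length h
    simpa [listPow_length] using this
  have hvpos : 0 < v.length := List.length_pos_iff.mpr hvne
  have hqk : q < k := by
    rw [hq, Nat.div_lt_iff_lt_mul hnpos]
    omega
  set x := z.take r with hx
  set y := z.drop r with hy
  have hxy : z = x ++ y := (List.take_append_drop r z).symm
  have hxlen : x.length = r := by
    rw [hx, List.length_take]; omega
  have hylen : y.length = n - r := by
    rw [hy, List.length_drop]
  have hyne : y ≠ [] := by
    intro hc
    have := congrArg List.length hc
    simp [hylen] at this
    omega
  -- u = z^q ++ x
  have hu_eq : u = listPow z q ++ x := by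
    have h1 : u = (listPow z k).take u.length := by
      rw [← h, List.take_append, List.take_length, Nat.sub_self,
        List.take_zero, List.append_nil]
    rw [h1, ← hulen, take_listPow z q k r hqk (le_of_lt hrn)]
  -- v = y ++ z^(k - q - 1)
  set l := k - q - 1 with hl
  have hv_eq : v = y ++ listPow z l := by
    have hk_split : k = q + (1 + l) := by omega
    have h2 : listPow z k = listPow z q ++ (x ++ (y ++ listPow z l)) := by
      rw [hk_split, listPow_add, listPow_add]
      congr 1
      rw [listPow_succ, listPow_zero]  -- listPow z 1 = z ++ []  — adjust below
      rw [List.append_nil, hxy, List.append_assoc]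
    have h3 : u ++ v = (listPow z q ++ x) ++ (y ++ listPow z l) := by
      rw [h, h2, List.append_assoc]
    rw [hu_eq] at h3
    exact List.append_cancel_left h3
  -- x is a palindrome
  have hx_pref : x <+: u := by
    have hxz : x <+: listPow z k := by
      have : x = (listPow z k).take r := by
        have := take_listPow z 0 k r (by omega) (le_of_lt hrn)
        simpa [listPow_zero] using this.symm
      rw [this]; exact List.take_prefix _ _
    have huz : u <+: listPow z k := ⟨v, h⟩
    exact List.prefix_of_prefix_length_le hxz huz (by omega)
  have hx_suff : x <:+ u := by rw [hu_eq]; exact List.suffix_append _ _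
  have hx_pal : x.reverse = x := pal_of_prefix_suffix hu hx_pref hx_suff
  -- v = (y++x)^l ++ y
  have hv_eq2 : v = listPow (y ++ x) l ++ y := by
    rw [hv_eq, hxy, ← shift_listPow]
  -- y is a palindrome
  have hy_pref : y <+: v := by rw [hv_eq]; exact List.prefix_append _ _
  have hy_suff : y <:+ v := by rw [hv_eq2]; exact List.suffix_append _ _
  have hy_pal : y.reverse = y := pal_of_prefix_suffix hv hy_pref hy_suff
  exact ⟨x, y, hx_pal, hy_pal, hyne, hxy,
    ⟨q, by rw [hu_eq, hxy]⟩, ⟨l, hv_eq2⟩⟩
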